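/- Let μ > 0 and take g_i = μ for all i ∈ {1,…,n}, so that f(x) = μ·card(x) + ‖x‖². Then for every x ∈ ℝⁿ the biconjugate is given explicitly by f**(x) = Σ_{i=1}^n (μ − max(√μ − |x_i|, 0)²) + ‖x‖²; equivalently, the quadratic envelope is R_g(x) = Σ_{i=1}^n (μ − max(√μ − |x_i|, 0)²). -/

import Mathlib

open scoped RealInnerProductSpace ENNReal
noncomputable section

/-- `ℝⁿ` with the Euclidean inner product and norm. -/
abbrev Evec (n : ℕ) := EuclideanSpace ℝ (Fin n)

/-- The number of nonzero entries of a vector. -/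
def spcard {n : ℕ} (x : Evec n) : ℕ := (Finset.univ.filter (fun i => x i ≠ 0)).card

/-- The absolute values of the entries of `x` sorted in nonincreasing order,
as a `1`-based function on `ℕ` (with value `0` outside `{1,…,n}`, so the
convention `x̃_{n+1} = 0` is built in). -/
def sortedAbs {n : ℕ} (x : Evec n) : ℕ → ℝ :=
  fun j => if h : 1 ≤ j ∧ j ≤ n then
    |x ((Tuple.sort (fun i : Fin n => -|x i|)) ⟨j - 1, by omega⟩)| else 0

/-- `G(k) = ∑_{i=1}^k g_i`. -/
def Gsum (g : ℕ → ℝ≥0∞) (k : ℕ) : ℝ≥0∞ := ∑ i ∈ Finset.Icc 1 k, g i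

/-- `f(x) = G(card x) + ‖x‖²`, valued in `EReal`. -/
def fobj {n : ℕ} (g : ℕ → ℝ≥0∞) (x : Evec n) : EReal :=
  ((Gsum g (spcard x) : ℝ≥0∞) : EReal) + ((‖x‖ ^ 2 : ℝ) : EReal)

/-- The convex conjugate `f*` of `f`. -/
def fconj {n : ℕ} (g : ℕ → ℝ≥0∞) (y : Evec n) : EReal :=
  ⨆ x : Evec n, ((⟪x, y⟫ : ℝ) : EReal) - fobj g x

/-- The biconjugate (convex envelope) `f**` of `f`. -/
def fbiconj {n : ℕ} (g : ℕ → ℝ≥0∞) (x : Evec n) : EReal :=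
  ⨆ y : Evec n, ((⟪x, y⟫ : ℝ) : EReal) - fconj g y

/-- `v` is a subgradient of `f**` at `x`. -/
def IsSubgrad {n : ℕ} (g : ℕ → ℝ≥0∞) (v x : Evec n) : Prop :=
  ∀ w : Evec n, fbiconj g x + ((⟪v, w - x⟫ : ℝ) : EReal) ≤ fbiconj g w

/-- `z = (I − AᵀA)x + Aᵀb`. -/
def zvec {n m : ℕ} (A : Evec n →L[ℝ] Evec m) (b : Evec m) (x : Evec n) : Evec n :=
  x - ContinuousLinearMap.adjoint A (A x) + ContinuousLinearMap.adjoint A b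

/-- `x` is a stationary point of the relaxation `R_g(·) + ‖A·−b‖²`:
`2z` is a subgradient of `f**` at `x`, where `z = (I − AᵀA)x + Aᵀb`. -/
def IsStationaryPt {n m : ℕ} (g : ℕ → ℝ≥0∞) (A : Evec n →L[ℝ] Evec m) (b : Evec m)
    (x : Evec n) : Prop :=
  IsSubgrad g ((2 : ℝ) • zvec A b x) x

/-- `A` satisfies the RIP of order `r` with constant `δ`. -/
def RIP {n m : ℕ} (A : Evec n →L[ℝ] Evec m) (r : ℕ) (δ : ℝ) : Prop :=
  ∀ w : Evec n, spcard w ≤ r →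
    (1 - δ) * ‖w‖ ^ 2 ≤ ‖A w‖ ^ 2 ∧ ‖A w‖ ^ 2 ≤ (1 + δ) * ‖w‖ ^ 2

/-- Square root on `[0,∞]`, with `√(+∞) = +∞`. -/
def sqrtE (a : ℝ≥0∞) : ℝ≥0∞ := a ^ (1 / 2 : ℝ)

/-- The relaxed objective `R_g(x) + ‖Ax − b‖²`, where `R_g(x) = f**(x) − ‖x‖²`. -/
def relaxObj {n m : ℕ} (g : ℕ → ℝ≥0∞) (A : Evec n →L[ℝ] Evec m) (b : Evec m)
    (x : Evec n) : EReal :=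
  (fbiconj g x - ((‖x‖ ^ 2 : ℝ) : EReal)) + ((‖A x - b‖ ^ 2 : ℝ) : EReal)

/-- The original (unrelaxed) objective `G(card(x)) + ‖Ax − b‖²`. -/
def origObj {n m : ℕ} (g : ℕ → ℝ≥0∞) (A : Evec n →L[ℝ] Evec m) (b : Evec m)
    (x : Evec n) : EReal :=
  ((Gsum g (spcard x) : ℝ≥0∞) : EReal) + ((‖A x - b‖ ^ 2 : ℝ) : EReal)

/-- `x` is a local minimizer of `F`. -/
def IsLocalMinimizer {n : ℕ} (F : Evec n → EReal) (x : Evec n) : Prop :=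
  ∃ U ∈ nhds x, ∀ w ∈ U, F x ≤ F w

lemma innerSumEq {n : ℕ} (x y : Evec n) : (⟪x, y⟫ : ℝ) = ∑ i, x i * y i := by
  simp [PiLp.inner_apply, RCLike.inner_apply, conj_trivial]
  exact Finset.sum_congr rfl fun i _ => mul_comm _ _

lemma normsq_sum {n : ℕ} (x : Evec n) : ‖x‖ ^ 2 = ∑ i, (x i) ^ 2 := by
  rw [← real_inner_self_eq_norm_sq]
  simp only [PiLp.inner_apply, RCLike.inner_apply, conj_trivial, sq]

lemma card_mul {n : ℕ} (μ : ℝ) (x : Evec n) :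
    μ * (spcard x : ℝ) = ∑ i, (if x i = 0 then 0 else μ) := by
  have h : ∀ i : Fin n, (if x i = 0 then (0:ℝ) else μ) = if x i ≠ 0 then μ else 0 :=
    fun i => by by_cases h : x i = 0 <;> simp [h]
  rw [Finset.sum_congr rfl fun i _ => h i, ← Finset.sum_filter, Finset.sum_const,
    nsmul_eq_mul]
  unfold spcard; ring

lemma gsum_eq (μ : ℝ) (hμ : 0 < μ) (k : ℕ) :
    ((Gsum (fun i => if i = 0 then 0 else ENNReal.ofReal μ) k : ℝ≥0∞) : EReal)
      = ((μ * k : ℝ) : EReal) := by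
  unfold Gsum
  have h : ∑ i ∈ Finset.Icc 1 k, (if i = 0 then 0 else ENNReal.ofReal μ)
      = ENNReal.ofReal (μ * k) := by
    rw [Finset.sum_congr rfl (fun i hi => if_neg (by
      have := (Finset.mem_Icc.mp hi).1; omega))]
    rw [Finset.sum_const, Nat.card_Icc, nsmul_eq_mul]
    rw [← ENNReal.ofReal_natCast (k + 1 - 1), ← ENNReal.ofReal_mul (by positivity)]
    norm_num [mul_comm]
  rw [h, EReal.coe_ennreal_ofReal, max_eq_left (by positivity)]

lemma fobj_eq {n : ℕ} (μ : ℝ) (hμ : 0 < μ) (x : Evec n) :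
    fobj (fun i => if i = 0 then 0 else ENNReal.ofReal μ) x
      = ((μ * spcard x + ‖x‖ ^ 2 : ℝ) : EReal) := by
  unfold fobj
  rw [gsum_eq μ hμ]
  exact (EReal.coe_add _ _).symm

lemma expand_sum {n : ℕ} (μ : ℝ) (x y : Evec n) :
    (⟪x, y⟫ : ℝ) - (μ * spcard x + ‖x‖ ^ 2)
      = ∑ i, (x i * y i - (if x i = 0 then 0 else μ) - (x i) ^ 2) := by
  rw [innerSumEq, normsq_sum, card_mul μ x]
  rw [Finset.sum_sub_distrib, Finset.sum_sub_distrib]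
  ring

lemma scal1 (μ t s : ℝ) : t * s - (if t = 0 then 0 else μ) - t ^ 2 ≤ max (s ^ 2 / 4 - μ) 0 := by
  by_cases ht : t = 0
  · simp [ht]
  · simp only [ht, if_false]
    have h : t * s - t ^ 2 ≤ s ^ 2 / 4 := by nlinarith [sq_nonneg (t - s / 2)]
    have := le_max_left (s ^ 2 / 4 - μ) 0
    linarith

lemma scal1eq (μ s : ℝ) (hμ : 0 < μ) :
    max (s ^ 2 / 4 - μ) 0
      = (if μ < s ^ 2 / 4 then s / 2 else 0) * s
        - (if (if μ < s ^ 2 / 4 then s / 2 else 0) = 0 then 0 else μ)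
        - (if μ < s ^ 2 / 4 then s / 2 else 0) ^ 2 := by
  by_cases h : μ < s ^ 2 / 4
  · have hs : s ≠ 0 := by intro h0; rw [h0] at h; norm_num at h; linarith
    rw [if_pos h, max_eq_left (by linarith), if_neg (div_ne_zero hs two_ne_zero)]
    ring
  · rw [if_neg h, max_eq_right (by linarith [not_lt.mp h])]
    simp

lemma fconj_eq {n : ℕ} (μ : ℝ) (hμ : 0 < μ) (y : Evec n) :
    fconj (fun i => if i = 0 then 0 else ENNReal.ofReal μ) y
      = ((∑ i, max ((y i) ^ 2 / 4 - μ) 0 : ℝ) : EReal) := by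
  unfold fconj
  apply le_antisymm
  · apply iSup_le; intro x
    rw [fobj_eq μ hμ x, ← EReal.coe_sub, EReal.coe_le_coe_iff, expand_sum]
    exact Finset.sum_le_sum fun i _ => scal1 μ (x i) (y i)
  · set xw : Evec n := WithLp.toLp 2 (fun i => if μ < (y i) ^ 2 / 4 then y i / 2 else 0 : Fin n → ℝ)
      with hxw
    refine le_trans ?_ (le_iSup _ xw)
    rw [fobj_eq μ hμ xw, ← EReal.coe_sub, EReal.coe_le_coe_iff, expand_sum]
    refine le_of_eq (Finset.sum_congr rfl fun i _ => ?_)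
    have hx : xw i = if μ < (y i) ^ 2 / 4 then y i / 2 else 0 := rfl
    rw [hx]
    exact scal1eq μ (y i) hμ

lemma scal2 (μ t s : ℝ) (hμ : 0 < μ) :
    t * s - max (s ^ 2 / 4 - μ) 0 ≤ μ - max (Real.sqrt μ - |t|) 0 ^ 2 + t ^ 2 := by
  set r := Real.sqrt μ with hr
  have hr0 : 0 ≤ r := Real.sqrt_nonneg μ
  have hr2 : r ^ 2 = μ := Real.sq_sqrt hμ.le
  have hts : t * s ≤ |t| * |s| := by
    calc t * s ≤ |t * s| := le_abs_self _
    _ = |t| * |s| := abs_mul t s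
  have ht2 : |t| ^ 2 = t ^ 2 := sq_abs t
  have hs2 : |s| ^ 2 = s ^ 2 := sq_abs s
  rcases le_or_gt r |t| with h | h
  · have e1 : max (r - |t|) 0 = 0 := max_eq_right (by linarith)
    rw [e1]
    rcases le_or_gt (s ^ 2 / 4 - μ) 0 with hc | hc
    · rw [max_eq_right hc]
      nlinarith [sq_nonneg (|t| - |s| / 2)]
    · rw [max_eq_left hc.le]
      nlinarith [sq_nonneg (|t| - |s| / 2)]
  · have e1 : max (r - |t|) 0 = r - |t| := max_eq_left (by linarith)
    rw [e1]
    rcases le_or_gt (s ^ 2 / 4 - μ) 0 with hc | hc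
    · rw [max_eq_right hc]
      have hsle : |s| ≤ 2 * r := by nlinarith [abs_nonneg s]
      nlinarith [abs_nonneg t]
    · rw [max_eq_left hc.le]
      have hsgt : 2 * r < |s| := by nlinarith [abs_nonneg s]
      have key : 0 ≤ (|s| / 2 - r) * (|s| / 2 + r - 2 * |t|) := by
        apply mul_nonneg <;> nlinarith
      nlinarith

lemma scal2eq (μ t s : ℝ) (hμ : 0 < μ)
    (hs : s = if Real.sqrt μ ≤ |t| then 2 * t
      else if 0 ≤ t then 2 * Real.sqrt μ else -(2 * Real.sqrt μ)) :
    μ - max (Real.sqrt μ - |t|) 0 ^ 2 + t ^ 2 = t * s - max (s ^ 2 / 4 - μ) 0 := by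
  set r := Real.sqrt μ with hr
  have hr0 : 0 ≤ r := Real.sqrt_nonneg μ
  have hr2 : r ^ 2 = μ := Real.sq_sqrt hμ.le
  have ht2 : |t| ^ 2 = t ^ 2 := sq_abs t
  by_cases h : r ≤ |t|
  · rw [if_pos h] at hs
    have htm : t ^ 2 - μ ≥ 0 := by nlinarith
    rw [max_eq_right (by linarith), hs,
      max_eq_left (by nlinarith)]
    ring_nf
  · rw [if_neg h] at hs
    push_neg at h
    have e1 : max (r - |t|) 0 = r - |t| := max_eq_left (by linarith)
    rw [e1]
    by_cases hp : 0 ≤ t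
    · rw [if_pos hp] at hs
      have habs : |t| = t := abs_of_nonneg hp
      have : s ^ 2 / 4 - μ = 0 := by rw [hs]; nlinarith
      rw [this, max_self, hs, habs]
      nlinarith
    · rw [if_neg hp] at hs
      have habs : |t| = -t := abs_of_neg (not_le.mp hp)
      have : s ^ 2 / 4 - μ = 0 := by rw [hs]; nlinarith
      rw [this, max_self, hs, habs]
      nlinarith

lemma fbiconj_eq {n : ℕ} (μ : ℝ) (hμ : 0 < μ) (x : Evec n) :
    fbiconj (fun i => if i = 0 then 0 else ENNReal.ofReal μ) x
      = ((∑ i, (μ - max (Real.sqrt μ - |x i|) 0 ^ 2 + (x i) ^ 2) : ℝ) : EReal) := by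
  unfold fbiconj
  rw [show (⨆ y : Evec n, ((⟪x, y⟫ : ℝ) : EReal)
        - fconj (fun i => if i = 0 then 0 else ENNReal.ofReal μ) y)
      = ⨆ y : Evec n, (((⟪x, y⟫ - ∑ i, max ((y i) ^ 2 / 4 - μ) 0 : ℝ)) : EReal) from
    iSup_congr fun y => by rw [fconj_eq μ hμ, ← EReal.coe_sub]]
  apply le_antisymm
  · apply iSup_le; intro y
    rw [EReal.coe_le_coe_iff, innerSumEq, ← Finset.sum_sub_distrib]
    exact Finset.sum_le_sum fun i _ => scal2 μ (x i) (y i) hμ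
  · set w : Evec n := WithLp.toLp 2 (fun i => if Real.sqrt μ ≤ |x i| then 2 * x i
      else if 0 ≤ x i then 2 * Real.sqrt μ else -(2 * Real.sqrt μ) : Fin n → ℝ) with hw
    refine le_trans ?_ (le_iSup _ w)
    rw [EReal.coe_le_coe_iff, innerSumEq, ← Finset.sum_sub_distrib]
    refine le_of_eq (Finset.sum_congr rfl fun i _ => ?_)
    exact scal2eq μ (x i) (w i) hμ rfl


/-- For the constant sequence `g_i = μ > 0` (so that
`f(x) = μ·card(x) + ‖x‖²`), the biconjugate is given explicitly by
`f**(x) = Σ_i (μ − max(√μ − |x_i|, 0)²) + ‖x‖²`, and the quadratic envelope is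
`R_g(x) = Σ_i (μ − max(√μ − |x_i|, 0)²)`. -/
theorem constant_g_envelope_formula
    {n : ℕ} (μ : ℝ) (hμ : 0 < μ) (x : Evec n) :
    fbiconj (fun i => if i = 0 then 0 else ENNReal.ofReal μ) x
      = ((((∑ i : Fin n, (μ - max (Real.sqrt μ - |x i|) 0 ^ 2)) + ‖x‖ ^ 2 : ℝ)) : EReal) ∧
    fbiconj (fun i => if i = 0 then 0 else ENNReal.ofReal μ) x - ((‖x‖ ^ 2 : ℝ) : EReal)
      = (((∑ i : Fin n, (μ - max (Real.sqrt μ - |x i|) 0 ^ 2) : ℝ)) : EReal) := by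
  have key : (∑ i : Fin n, (μ - max (Real.sqrt μ - |x i|) 0 ^ 2 + (x i) ^ 2) : ℝ)
      = (∑ i : Fin n, (μ - max (Real.sqrt μ - |x i|) 0 ^ 2)) + ‖x‖ ^ 2 := by
    rw [normsq_sum, ← Finset.sum_add_distrib]
  constructor
  · rw [fbiconj_eq μ hμ x, key]
  · rw [fbiconj_eq μ hμ x, ← EReal.coe_sub, key]
    norm_num
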